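/- Let r divide k, d ≥ k, ρ ∈ [0,1), β ≥ 0 and α_1 = ρα. Define b_{s−1} = ((d−k)/r + s)·β/(1−ρ) for s = 1,…,k/r. Then for α ∈ (b_{i−1}, b_i] with 1 ≤ i ≤ k/r − 1, the capacity C(α) = Σ_{s=1}^{k/r} min(rρα + (d − r(s−1))β, rα) equals (k − i r (1−ρ))α + (1−ρ) Σ_{j=0}^{i−1} r b_j; for α ≤ b_0 it equals kα; and for α > b_{k/r−1} it equals kρα + (1−ρ)Σ_{j=0}^{k/r−1} r b_j. -/
import Mathlib

private lemma gaussR (n : ℕ) : ∑ s ∈ Finset.range n, (s:ℝ) = n*(n-1)/2 := by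
  induction n with
  | zero => simp
  | succ n ih => rw [Finset.sum_range_succ, ih]; push_cast; ring

private lemma rmulR (r : ℕ) (hr : (r:ℝ) ≠ 0) (c x β : ℝ) :
    (r:ℝ) * ((c / r + x) * β) = (c + r * x) * β := by
  have h : (r:ℝ) * (c / r) = c := by field_simp
  calc (r:ℝ) * ((c/r + x)*β) = ((r:ℝ)*(c/r) + r*x)*β := by ring
    _ = (c + r*x)*β := by rw [h]

private lemma expandR (r d : ℕ) (ρ β α : ℝ) (n : ℕ) :
    ∑ s ∈ Finset.range n, ((r:ℝ)*(ρ*α) + ((d:ℝ) - r*s)*β)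
      = n*((r:ℝ)*(ρ*α) + d*β) - r*β*(n*(n-1)/2) := by
  have h : ∀ s ∈ Finset.range n,
      (r:ℝ)*(ρ*α) + ((d:ℝ) - r*s)*β = ((r:ℝ)*(ρ*α) + d*β) - (r*β)*(s:ℝ) := by
    intro s _; ring
  rw [Finset.sum_congr rfl h, Finset.sum_sub_distrib, Finset.sum_const, ← Finset.mul_sum,
    gaussR]
  simp [nsmul_eq_mul]; ring

private lemma capa (m r d : ℕ) (ρ β α : ℝ) (i : ℕ) (hi : i ≤ m)
    (hlow : ∀ s : ℕ, s < m - i → (r:ℝ)*α ≤ (r:ℝ)*(ρ*α) + ((d:ℝ) - r*s)*β)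
    (hhigh : ∀ s : ℕ, m - i ≤ s → s < m → (r:ℝ)*(ρ*α) + ((d:ℝ) - r*s)*β ≤ (r:ℝ)*α) :
    ∑ s ∈ Finset.range m, min ((r:ℝ)*(ρ*α) + ((d:ℝ) - r*s)*β) ((r:ℝ)*α)
      = ((m:ℝ) - i)*((r:ℝ)*α) + (i:ℝ)*((r:ℝ)*(ρ*α))
        + ((i:ℝ)*d*β - (r:ℝ)*β*((m:ℝ)*((m:ℝ)-1)/2 - ((m:ℝ)-i)*((m:ℝ)-i-1)/2)) := by
  rw [Finset.range_eq_Ico, ← Finset.sum_Ico_consecutive _ (Nat.zero_le (m - i)) (Nat.sub_le m i)]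
  have h1 : ∑ s ∈ Finset.Ico 0 (m - i), min ((r:ℝ)*(ρ*α) + ((d:ℝ) - r*s)*β) ((r:ℝ)*α)
      = ((m - i : ℕ) : ℝ) * ((r:ℝ)*α) := by
    rw [Finset.sum_congr rfl (fun s hs => min_eq_right (hlow s (by
      simpa using (Finset.mem_Ico.mp hs).2)))]
    simp [mul_comm]
  have h2 : ∑ s ∈ Finset.Ico (m - i) m, min ((r:ℝ)*(ρ*α) + ((d:ℝ) - r*s)*β) ((r:ℝ)*α)
      = ∑ s ∈ Finset.Ico (m - i) m, ((r:ℝ)*(ρ*α) + ((d:ℝ) - r*s)*β) := by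
    refine Finset.sum_congr rfl (fun s hs => min_eq_left ?_)
    obtain ⟨h, h'⟩ := Finset.mem_Ico.mp hs
    exact hhigh s h h'
  rw [h1, h2, Finset.sum_Ico_eq_sub _ (Nat.sub_le m i), expandR, expandR]
  have hc : ((m - i : ℕ) : ℝ) = (m:ℝ) - i := by
    push_cast [Nat.cast_sub hi]; ring
  rw [hc]; ring

private lemma sum_bR (r d k : ℕ) (ρ β : ℝ) (hρ : (1:ℝ) - ρ ≠ 0) (hr0 : (r:ℝ) ≠ 0) (n : ℕ) :
    ∑ j ∈ Finset.range n, (r:ℝ) * ((((d : ℝ) - k) / r + ((j:ℝ) + 1)) * β / (1 - ρ))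
      = ((n:ℝ)*((d:ℝ)-k) + r*((n:ℝ)*((n:ℝ)-1)/2 + n))*β/(1-ρ) := by
  have h : ∀ j ∈ Finset.range n,
      (r:ℝ) * ((((d : ℝ) - k) / r + ((j:ℝ) + 1)) * β / (1 - ρ))
        = (((d:ℝ)-k)*β/(1-ρ) + r*β/(1-ρ)) + (r*β/(1-ρ))*(j:ℝ) := by
    intro j _
    rw [mul_div_assoc, rmulR r hr0]
    field_simp
    ring
  rw [Finset.sum_congr rfl h, Finset.sum_add_distrib, Finset.sum_const, ← Finset.mul_sum,
    gaussR]
  simp [nsmul_eq_mul]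
  field_simp
  ring

set_option maxHeartbeats 1000000 in
theorem mincut_capacity_piecewise
    (k r d : ℕ) (hr : 1 ≤ r) (hrk : r ∣ k) (hk : 1 ≤ k) (hkd : k ≤ d)
    (ρ β : ℝ) (hρ0 : 0 ≤ ρ) (hρ1 : ρ < 1) (hβ : 0 ≤ β) :
    let b : ℕ → ℝ := fun j => (((d : ℝ) - k) / r + (j + 1)) * β / (1 - ρ)
    let C : ℝ → ℝ := fun α => ∑ s ∈ Finset.range (k / r),
      min ((r : ℝ) * (ρ * α) + ((d : ℝ) - r * s) * β) ((r : ℝ) * α)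
    (∀ α : ℝ, α ≤ b 0 → C α = (k : ℝ) * α) ∧
    (∀ i ∈ Finset.Icc 1 (k / r - 1), ∀ α : ℝ, b (i - 1) < α → α ≤ b i →
      C α = ((k : ℝ) - i * r * (1 - ρ)) * α +
            (1 - ρ) * ∑ j ∈ Finset.range i, (r : ℝ) * b j) ∧
    (∀ α : ℝ, b (k / r - 1) < α →
      C α = (k : ℝ) * ρ * α + (1 - ρ) * ∑ j ∈ Finset.range (k / r), (r : ℝ) * b j) := by
  intro b C
  set m := k / r with hm_def
  have hmk : r * m = k := Nat.mul_div_cancel' hrk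
  have hk_eq : (r:ℝ) * m = k := by exact_mod_cast congrArg (Nat.cast : ℕ → ℝ) hmk
  have hm1 : 1 ≤ m := (Nat.one_le_div_iff (by omega)).mpr (Nat.le_of_dvd hk hrk)
  have hr0 : (0:ℝ) < r := by exact_mod_cast hr
  have hρ : (0:ℝ) < 1 - ρ := by linarith
  have hρ' : (1:ℝ) - ρ ≠ 0 := ne_of_gt hρ
  have hdk : (k:ℝ) ≤ d := by exact_mod_cast hkd
  refine ⟨?_, ?_, ?_⟩
  · -- case α ≤ b 0
    intro α hα
    simp only [b, Nat.cast_zero] at hα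
    rw [le_div_iff₀ hρ] at hα
    have hb0 : (r:ℝ)*(1-ρ)*α ≤ ((d:ℝ) - k + r*((0:ℝ)+1))*β := by
      have h2 := mul_le_mul_of_nonneg_left hα hr0.le
      rw [rmulR r (ne_of_gt hr0)] at h2
      linarith [h2]
    have hlow : ∀ s : ℕ, s < m - 0 → (r:ℝ)*α ≤ (r:ℝ)*(ρ*α) + ((d:ℝ) - r*s)*β := by
      intro s hs
      have hs' : (s:ℝ) ≤ (m:ℝ) - 1 := by
        have h : s + 1 ≤ m := by omega
        have : ((s:ℕ):ℝ) + 1 ≤ (m:ℝ) := by exact_mod_cast h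
        linarith
      have hds : ((d:ℝ) - k + r*((0:ℝ)+1)) ≤ (d:ℝ) - r*s := by
        nlinarith [mul_le_mul_of_nonneg_left hs' hr0.le, hk_eq]
      nlinarith [mul_le_mul_of_nonneg_right hds hβ]
    have hhigh : ∀ s : ℕ, m - 0 ≤ s → s < m → (r:ℝ)*(ρ*α) + ((d:ℝ) - r*s)*β ≤ (r:ℝ)*α := by
      intro s hs hs'; omega
    have hcapa := capa m r d ρ β α 0 (Nat.zero_le m) hlow hhigh
    simp only [C, ← hm_def]
    rw [hcapa]
    push_cast
    linear_combination α * hk_eq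
  · -- middle case
    intro i hi α hlo hhi
    obtain ⟨hi1, hi2⟩ := Finset.mem_Icc.mp hi
    have him : i ≤ m := by omega
    simp only [b] at hhi hlo
    rw [le_div_iff₀ hρ] at hhi
    rw [div_lt_iff₀ hρ] at hlo
    have hcast : (((i-1 : ℕ)):ℝ) + 1 = (i:ℝ) := by
      push_cast [Nat.cast_sub hi1]; ring
    rw [hcast] at hlo
    have hbi : (r:ℝ)*(1-ρ)*α ≤ ((d:ℝ) - k + r*((i:ℝ)+1))*β := by
      have h2 := mul_le_mul_of_nonneg_left hhi hr0.le
      rw [rmulR r (ne_of_gt hr0)] at h2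
      linarith [h2]
    have hbi1 : ((d:ℝ) - k + r*(i:ℝ))*β < (r:ℝ)*(1-ρ)*α := by
      have h2 := (mul_lt_mul_iff_right₀ hr0).mpr hlo
      rw [rmulR r (ne_of_gt hr0)] at h2
      linarith [h2]
    have hlow : ∀ s : ℕ, s < m - i → (r:ℝ)*α ≤ (r:ℝ)*(ρ*α) + ((d:ℝ) - r*s)*β := by
      intro s hs
      have hs' : (s:ℝ) ≤ (m:ℝ) - (i:ℝ) - 1 := by
        have h : s + i + 1 ≤ m := by omega
        have : ((s:ℕ):ℝ) + i + 1 ≤ (m:ℝ) := by exact_mod_cast h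
        linarith
      have hds : ((d:ℝ) - k + r*((i:ℝ)+1)) ≤ (d:ℝ) - r*s := by
        nlinarith [mul_le_mul_of_nonneg_left hs' hr0.le, hk_eq]
      nlinarith [mul_le_mul_of_nonneg_right hds hβ]
    have hhigh : ∀ s : ℕ, m - i ≤ s → s < m → (r:ℝ)*(ρ*α) + ((d:ℝ) - r*s)*β ≤ (r:ℝ)*α := by
      intro s hs hs'
      have h : m ≤ s + i := by omega
      have hsr : (m:ℝ) - i ≤ (s:ℝ) := by
        have : (m:ℝ) ≤ (s:ℝ) + i := by exact_mod_cast h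
        linarith
      have hds : (d:ℝ) - r*s ≤ (d:ℝ) - k + r*(i:ℝ) := by
        nlinarith [mul_le_mul_of_nonneg_left hsr hr0.le, hk_eq]
      nlinarith [mul_le_mul_of_nonneg_right hds hβ]
    have hcapa := capa m r d ρ β α i him hlow hhigh
    simp only [C, ← hm_def]
    rw [hcapa]
    simp only [b]
    rw [sum_bR r d k ρ β hρ' (ne_of_gt hr0) i, mul_comm ((1:ℝ)-ρ), div_mul_cancel₀ _ hρ']
    linear_combination (α - (i:ℝ)*β) * hk_eq
  · -- last case
    intro α hlo
    simp only [b] at hlo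
    rw [div_lt_iff₀ hρ] at hlo
    have hcast : (((m-1 : ℕ)):ℝ) + 1 = (m:ℝ) := by
      push_cast [Nat.cast_sub hm1]; ring
    rw [hcast] at hlo
    have hbm : ((d:ℝ) - k + r*(m:ℝ))*β < (r:ℝ)*(1-ρ)*α := by
      have h2 := (mul_lt_mul_iff_right₀ hr0).mpr hlo
      rw [rmulR r (ne_of_gt hr0)] at h2
      linarith [h2]
    have hlow : ∀ s : ℕ, s < m - m → (r:ℝ)*α ≤ (r:ℝ)*(ρ*α) + ((d:ℝ) - r*s)*β := by
      intro s hs; omega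
    have hhigh : ∀ s : ℕ, m - m ≤ s → s < m → (r:ℝ)*(ρ*α) + ((d:ℝ) - r*s)*β ≤ (r:ℝ)*α := by
      intro s hs hs'
      have h0 : (0:ℝ) ≤ (s:ℝ) := by positivity
      have hds : (d:ℝ) - r*s ≤ (d:ℝ) - k + r*(m:ℝ) := by
        nlinarith [hk_eq]
      nlinarith [mul_le_mul_of_nonneg_right hds hβ]
    have hcapa := capa m r d ρ β α m le_rfl hlow hhigh
    simp only [C, ← hm_def]
    rw [hcapa]
    simp only [b]
    rw [sum_bR r d k ρ β hρ' (ne_of_gt hr0) m, mul_comm ((1:ℝ)-ρ), div_mul_cancel₀ _ hρ']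
    linear_combination (ρ*α - (m:ℝ)*β) * hk_eq
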